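/- Let G = (V, F, E) be a finite bipartite graph with a perfect matching M, let S_F ⊆ F, set S_V = M(S_F), and let σ : S_F → S_V be any bijection. Then the intervened bipartite graph G_do(S_F, σ) has a perfect matching, and is therefore self-contained. -/

import Mathlib

variable {F V : Type*} [Fintype F] [Fintype V] [DecidableEq F] [DecidableEq V]

/-- The adjacency set `N(S)` of a set `S ⊆ F`, restricted to the vertex set `V'`. -/
def subAdj (E : Finset (F × V)) (V' : Finset V) (S : Finset F) : Finset V :=
  V'.filter fun v => ∃ f ∈ S, (f, v) ∈ E

/-- `S ⊆ F` is a self-contained set. -/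
def SCSet (E : Finset (F × V)) (V' : Finset V) (S : Finset F) : Prop :=
  S.card = (subAdj E V' S).card ∧ ∀ S' ⊆ S, S'.card ≤ (subAdj E V' S').card

/-- The bipartite graph with equation part `F'`, variable part `V'` and edges `E`
is self-contained. -/
def SCGraph (E : Finset (F × V)) (F' : Finset F) (V' : Finset V) : Prop :=
  F'.card = V'.card ∧ SCSet E V' F'

/-- `M` is a matching of the bipartite graph with edge set `E`. -/
def IsMatching (E M : Finset (F × V)) : Prop :=
  M ⊆ E ∧ (∀ e ∈ M, ∀ e' ∈ M, e.1 = e'.1 → e = e') ∧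
    ∀ e ∈ M, ∀ e' ∈ M, e.2 = e'.2 → e = e'

/-- `M` is a perfect matching: a matching covering every vertex of `F` and of `V`. -/
def IsPerfectMatching (E M : Finset (F × V)) : Prop :=
  IsMatching E M ∧ (∀ f : F, ∃ v, (f, v) ∈ M) ∧ ∀ v : V, ∃ f, (f, v) ∈ M

/-- The edge set of the intervened bipartite graph `G_do(S_F, σ)`:
edges of `E` whose equation endpoint is not in `S_F`, together with the
edges `(f, σ f)` for `f ∈ S_F`. -/
def doEdges (E : Finset (F × V)) (SF : Finset F) (σ : F → V) : Finset (F × V) :=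
  E.filter (fun e => e.1 ∉ SF) ∪ SF.image fun f => (f, σ f)

/-- if `M` is a perfect matching of `G = (V, F, E)`, `S_F ⊆ F`,
`S_V = M(S_F)`, and `σ : S_F → S_V` is a bijection, then the intervened bipartite
graph `G_do(S_F, σ)` has a perfect matching, and is therefore self-contained.
A perfect matching gives a self-contained graph on `univ`. -/
lemma pm_scGraph (E' M' : Finset (F × V)) (h : IsPerfectMatching E' M') :
    SCGraph E' Finset.univ (Finset.univ : Finset V) := by
  obtain ⟨⟨hsub, h1, h2⟩, hF, hV⟩ := h
  choose m hm using hF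
  have minj : Function.Injective m := fun a b hab => by
    have := h2 _ (hm a) _ (hm b) hab
    exact (Prod.ext_iff.mp this).1
  have msurj : Function.Surjective m := fun v => by
    obtain ⟨f, hf⟩ := hV v
    refine ⟨f, ?_⟩
    have := h1 _ (hm f) _ hf rfl
    simpa using (Prod.ext_iff.mp this).2
  have hcard : Fintype.card F = Fintype.card V :=
    Fintype.card_of_bijective ⟨minj, msurj⟩
  have key : ∀ S' : Finset F, S'.card ≤ (subAdj E' Finset.univ S').card := by
    intro S'
    apply Finset.card_le_card_of_injOn m
    · intro f hf
      simp only [subAdj, Finset.mem_coe, Finset.mem_filter, Finset.mem_univ, true_and]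
      exact ⟨f, hf, hsub (hm f)⟩
    · exact fun a _ b _ hab => minj hab
  refine ⟨by simp [hcard], ?_, fun S' _ => key S'⟩
  have : (subAdj E' Finset.univ (Finset.univ : Finset F)) = Finset.univ := by
    apply Finset.eq_univ_of_card
    refine le_antisymm (Finset.card_le_univ _) ?_
    have h := key Finset.univ
    rwa [Finset.card_univ, hcard] at h
  simp [this, Finset.card_univ, hcard]

theorem intervened_graph_selfContained (E M : Finset (F × V))
    (hM : IsPerfectMatching E M) (SF : Finset F) (σ : F → V)
    (hσ : Set.BijOn σ (SF : Set F)
      (((M.filter fun e => e.1 ∈ SF).image Prod.snd : Finset V) : Set V)) :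
    (∃ M' : Finset (F × V), IsPerfectMatching (doEdges E SF σ) M') ∧
    SCGraph (doEdges E SF σ) Finset.univ Finset.univ := by
  obtain ⟨⟨hsub, h1, h2⟩, hF, hV⟩ := hM
  choose m hm using hF
  have minj : Function.Injective m := fun a b hab => by
    have := h2 _ (hm a) _ (hm b) hab
    exact (Prod.ext_iff.mp this).1
  have msurj : Function.Surjective m := fun v => by
    obtain ⟨f, hf⟩ := hV v
    refine ⟨f, ?_⟩
    have := h1 _ (hm f) _ hf rfl
    simpa using (Prod.ext_iff.mp this).2
  have hcard : Fintype.card F = Fintype.card V :=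
    Fintype.card_of_bijective ⟨minj, msurj⟩
  -- the new matching function
  set m' : F → V := fun f => if f ∈ SF then σ f else m f with hm'def
  -- if f ∈ SF then σ f is matched by M to some element of SF
  have hσmem : ∀ f ∈ SF, ∃ g ∈ SF, m g = σ f := by
    intro f hf
    have := hσ.mapsTo (by exact_mod_cast hf)
    simp only [Finset.coe_image, Set.mem_image, Finset.mem_coe,
      Finset.mem_filter] at this
    obtain ⟨e, ⟨heM, heS⟩, hesnd⟩ := this
    refine ⟨e.1, heS, ?_⟩
    have := h1 _ (hm e.1) _ heM rfl
    rw [← hesnd]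
    exact ((Prod.ext_iff.mp this).2)
  have m'inj : Function.Injective m' := by
    intro a b hab
    simp only [hm'def] at hab
    by_cases ha : a ∈ SF <;> by_cases hb : b ∈ SF <;>
      simp only [ha, hb, if_pos, if_neg, if_true, if_false] at hab
    · exact hσ.injOn (by exact_mod_cast ha) (by exact_mod_cast hb) hab
    · obtain ⟨g, hg, hgeq⟩ := hσmem a ha
      rw [← hgeq] at hab
      have hbg : b = g := minj hab.symm
      subst hbg
      exact absurd hg hb
    · obtain ⟨g, hg, hgeq⟩ := hσmem b hb
      rw [← hgeq] at hab
      have hag : a = g := minj hab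
      subst hag
      exact absurd hg ha
    · exact minj hab
  have m'surj : Function.Surjective m' :=
    ((Fintype.bijective_iff_injective_and_card m').mpr ⟨m'inj, hcard⟩).2
  set M' : Finset (F × V) := Finset.univ.image fun f => (f, m' f) with hM'def
  have memM' : ∀ e : F × V, e ∈ M' ↔ e.2 = m' e.1 := by
    intro e
    simp only [hM'def, Finset.mem_image, Finset.mem_univ, true_and]
    constructor
    · rintro ⟨f, rfl⟩; rfl
    · intro h; exact ⟨e.1, by rw [← h]⟩
  have hpm : IsPerfectMatching (doEdges E SF σ) M' := by
    refine ⟨⟨?_, ?_, ?_⟩, ?_, ?_⟩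
    · intro e he
      rw [memM'] at he
      simp only [doEdges, Finset.mem_union, Finset.mem_filter, Finset.mem_image]
      by_cases hf : e.1 ∈ SF
      · right
        exact ⟨e.1, hf, by rw [Prod.ext_iff]; exact ⟨rfl, by simp [he, hm'def, hf]⟩⟩
      · left
        have hev : e.2 = m e.1 := by simpa [hm'def, hf] using he
        have : e = (e.1, m e.1) := Prod.ext rfl hev
        exact ⟨this ▸ hsub (hm e.1), hf⟩
    · intro e he e' he' h
      rw [memM'] at he he'
      exact Prod.ext h (by rw [he, he', h])
    · intro e he e' he' h
      rw [memM'] at he he'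
      have : e.1 = e'.1 := m'inj (by rw [← he, ← he', h])
      exact Prod.ext this h
    · intro f; exact ⟨m' f, (memM' _).mpr rfl⟩
    · intro v
      obtain ⟨f, hf⟩ := m'surj v
      exact ⟨f, (memM' (f, v)).mpr hf.symm⟩
  exact ⟨⟨M', hpm⟩, pm_scGraph _ _ hpm⟩
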